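/- For every integer k with 1 ≤ k ≤ 6 and every σ > 0 there exists θ₀ ∈ (π/2, π) such that for every θ ∈ (π/2, θ₀] there exists κ₀ > 0 with: for every κ ≥ κ₀ there is a constant c > 0 such that for all τ ∈ (0,1] with κ·τ·sin θ ≤ π and all z ∈ Γ^τ_{θ,κ}, one has |μ₁(e^{−(σ+z)τ}) − 1| ≤ c·τ^k·|z|^k. -/

import Mathlib

open Real

/-- Generating polynomial of the k-step BDF method: δ(ξ) = ∑_{j=1}^{k} (1/j)(1−ξ)^j. -/
noncomputable def bdfDelta (k : ℕ) (ξ : ℂ) : ℂ :=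
  ∑ j ∈ Finset.Icc 1 k, (1 / (j : ℂ)) * (1 - ξ) ^ j

/-- Truncated sectorial contour Γ^τ_{θ,κ}. -/
noncomputable def contourTrunc (θ κ τ : ℝ) : Set ℂ :=
  {z : ℂ | ‖z‖ = κ ∧ |z.arg| ≤ θ} ∪
    {z : ℂ | ∃ r : ℝ, κ ≤ r ∧ r ≤ π / (τ * Real.sin θ) ∧
      (z = (r : ℂ) * Complex.exp (θ * Complex.I) ∨
        z = (r : ℂ) * Complex.exp (-θ * Complex.I))}

/-- Starting-correction coefficients a_j^{(k)} of the BDF-k scheme. -/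
noncomputable def aCoef : ℕ → ℕ → ℂ
  | 2, 1 => 1 / 2
  | 3, 1 => 11 / 12
  | 3, 2 => -(5 / 12)
  | 4, 1 => 31 / 24
  | 4, 2 => -(7 / 6)
  | 4, 3 => 3 / 8
  | 5, 1 => 1181 / 720
  | 5, 2 => -(177 / 80)
  | 5, 3 => 341 / 240
  | 5, 4 => -(251 / 720)
  | 6, 1 => 2837 / 1440
  | 6, 2 => -(2543 / 720)
  | 6, 3 => 17 / 5
  | 6, 4 => -(1201 / 720)
  | 6, 5 => 95 / 288
  | _, _ => 0

/-- μ₁(ξ) = δ(ξ)·(ξ/(1−ξ) + ∑_{j=1}^{k−1} a_j^{(k)} ξ^j). -/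
noncomputable def mu1 (k : ℕ) (ξ : ℂ) : ℂ :=
  bdfDelta k ξ * (ξ / (1 - ξ) + ∑ j ∈ Finset.Icc 1 (k - 1), aCoef k j * ξ ^ j)

/-- Quotient polynomials `Q_k` with `μ₁(ξ) − 1 = (1−ξ)^k Q_k(ξ)`. -/
noncomputable def muQ : ℕ → ℂ → ℂ
  | 1, _ => -1
  | 2, ξ => -1 + (1/4) * ξ
  | 3, ξ => -1 + (37/72) * ξ - (5/36) * ξ^2
  | 4, ξ => -1 + (223/288) * ξ - (5/12) * ξ^2 + (3/32) * ξ^3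
  | 5, ξ => -1 + (44437/43200) * ξ - (8929/10800) * ξ^2 + (5347/14400) * ξ^3
      - (251/3600) * ξ^4
  | 6, ξ => -1 + (36773/28800) * ξ - (4907/3600) * ξ^2 + (8801/9600) * ξ^3
      - (743/2160) * ξ^4 + (95/1728) * ξ^5
  | _, _ => 0

lemma muQ_continuous (k : ℕ) : Continuous (muQ k) := by
  match k with
  | 0 => exact continuous_const
  | 1 => exact continuous_const
  | 2 =>
    show Continuous fun ξ : ℂ => -1 + (1/4) * ξ
    fun_prop
  | 3 =>
    show Continuous fun ξ : ℂ => -1 + (37/72) * ξ - (5/36) * ξ^2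
    fun_prop
  | 4 =>
    show Continuous fun ξ : ℂ => -1 + (223/288) * ξ - (5/12) * ξ^2 + (3/32) * ξ^3
    fun_prop
  | 5 =>
    show Continuous fun ξ : ℂ => -1 + (44437/43200) * ξ - (8929/10800) * ξ^2
      + (5347/14400) * ξ^3 - (251/3600) * ξ^4
    fun_prop
  | 6 =>
    show Continuous fun ξ : ℂ => -1 + (36773/28800) * ξ - (4907/3600) * ξ^2
      + (8801/9600) * ξ^3 - (743/2160) * ξ^4 + (95/1728) * ξ^5
    fun_prop
  | (n+7) => exact continuous_const

lemma mu1_fac1 (ξ : ℂ) (h : ξ ≠ 1) : mu1 1 ξ - 1 = (1 - ξ) ^ 1 * muQ 1 ξ := by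
  have h1 : (1:ℂ) - ξ ≠ 0 := sub_ne_zero.2 (Ne.symm h)
  have hQ : muQ 1 ξ = -1 := rfl
  rw [hQ]
  simp only [mu1, bdfDelta, show (1:ℕ) - 1 = 0 from rfl,
    show Finset.Icc 1 1 = ({1} : Finset ℕ) from rfl,
    show Finset.Icc 1 0 = (∅ : Finset ℕ) from rfl]
  rw [Finset.sum_singleton,
    Finset.sum_empty]
  push_cast
  field_simp
  ring

lemma mu1_fac2 (ξ : ℂ) (h : ξ ≠ 1) : mu1 2 ξ - 1 = (1 - ξ) ^ 2 * muQ 2 ξ := by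
  have h1 : (1:ℂ) - ξ ≠ 0 := sub_ne_zero.2 (Ne.symm h)
  have hQ : muQ 2 ξ = -1 + (1/4) * ξ := rfl
  have ha1 : aCoef 2 1 = 1/2 := rfl
  rw [hQ]
  simp only [mu1, bdfDelta, show (2:ℕ) - 1 = 1 from rfl,
    show Finset.Icc 1 2 = ({1, 2} : Finset ℕ) from rfl,
    show Finset.Icc 1 1 = ({1} : Finset ℕ) from rfl]
  rw [Finset.sum_insert (by decide),
    Finset.sum_singleton,
    Finset.sum_singleton,
    ha1]
  push_cast
  field_simp
  ring

lemma mu1_fac3 (ξ : ℂ) (h : ξ ≠ 1) : mu1 3 ξ - 1 = (1 - ξ) ^ 3 * muQ 3 ξ := by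
  have h1 : (1:ℂ) - ξ ≠ 0 := sub_ne_zero.2 (Ne.symm h)
  have hQ : muQ 3 ξ = -1 + (37/72) * ξ - (5/36) * ξ^2 := rfl
  have ha1 : aCoef 3 1 = 11/12 := rfl
  have ha2 : aCoef 3 2 = -(5/12) := rfl
  rw [hQ]
  simp only [mu1, bdfDelta, show (3:ℕ) - 1 = 2 from rfl,
    show Finset.Icc 1 3 = ({1, 2, 3} : Finset ℕ) from rfl,
    show Finset.Icc 1 2 = ({1, 2} : Finset ℕ) from rfl]
  rw [Finset.sum_insert (by decide),
    Finset.sum_insert (by decide),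
    Finset.sum_singleton,
    Finset.sum_insert (by decide),
    Finset.sum_singleton,
    ha1,
    ha2]
  push_cast
  field_simp
  ring

lemma mu1_fac4 (ξ : ℂ) (h : ξ ≠ 1) : mu1 4 ξ - 1 = (1 - ξ) ^ 4 * muQ 4 ξ := by
  have h1 : (1:ℂ) - ξ ≠ 0 := sub_ne_zero.2 (Ne.symm h)
  have hQ : muQ 4 ξ = -1 + (223/288) * ξ - (5/12) * ξ^2 + (3/32) * ξ^3 := rfl
  have ha1 : aCoef 4 1 = 31/24 := rfl
  have ha2 : aCoef 4 2 = -(7/6) := rfl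
  have ha3 : aCoef 4 3 = 3/8 := rfl
  rw [hQ]
  simp only [mu1, bdfDelta, show (4:ℕ) - 1 = 3 from rfl,
    show Finset.Icc 1 4 = ({1, 2, 3, 4} : Finset ℕ) from rfl,
    show Finset.Icc 1 3 = ({1, 2, 3} : Finset ℕ) from rfl]
  rw [Finset.sum_insert (by decide),
    Finset.sum_insert (by decide),
    Finset.sum_insert (by decide),
    Finset.sum_singleton,
    Finset.sum_insert (by decide),
    Finset.sum_insert (by decide),
    Finset.sum_singleton,
    ha1,
    ha2,
    ha3]
  push_cast
  field_simp
  ring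

lemma mu1_fac5 (ξ : ℂ) (h : ξ ≠ 1) : mu1 5 ξ - 1 = (1 - ξ) ^ 5 * muQ 5 ξ := by
  have h1 : (1:ℂ) - ξ ≠ 0 := sub_ne_zero.2 (Ne.symm h)
  have hQ : muQ 5 ξ = -1 + (44437/43200) * ξ - (8929/10800) * ξ^2 + (5347/14400) * ξ^3 - (251/3600) * ξ^4 := rfl
  have ha1 : aCoef 5 1 = 1181/720 := rfl
  have ha2 : aCoef 5 2 = -(177/80) := rfl
  have ha3 : aCoef 5 3 = 341/240 := rfl
  have ha4 : aCoef 5 4 = -(251/720) := rfl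
  rw [hQ]
  simp only [mu1, bdfDelta, show (5:ℕ) - 1 = 4 from rfl,
    show Finset.Icc 1 5 = ({1, 2, 3, 4, 5} : Finset ℕ) from rfl,
    show Finset.Icc 1 4 = ({1, 2, 3, 4} : Finset ℕ) from rfl]
  rw [Finset.sum_insert (by decide),
    Finset.sum_insert (by decide),
    Finset.sum_insert (by decide),
    Finset.sum_insert (by decide),
    Finset.sum_singleton,
    Finset.sum_insert (by decide),
    Finset.sum_insert (by decide),
    Finset.sum_insert (by decide),
    Finset.sum_singleton,
    ha1,
    ha2,
    ha3,
    ha4]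
  push_cast
  field_simp
  ring

lemma mu1_fac6 (ξ : ℂ) (h : ξ ≠ 1) : mu1 6 ξ - 1 = (1 - ξ) ^ 6 * muQ 6 ξ := by
  have h1 : (1:ℂ) - ξ ≠ 0 := sub_ne_zero.2 (Ne.symm h)
  have hQ : muQ 6 ξ = -1 + (36773/28800) * ξ - (4907/3600) * ξ^2 + (8801/9600) * ξ^3 - (743/2160) * ξ^4 + (95/1728) * ξ^5 := rfl
  have ha1 : aCoef 6 1 = 2837/1440 := rfl
  have ha2 : aCoef 6 2 = -(2543/720) := rfl
  have ha3 : aCoef 6 3 = 17/5 := rfl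
  have ha4 : aCoef 6 4 = -(1201/720) := rfl
  have ha5 : aCoef 6 5 = 95/288 := rfl
  rw [hQ]
  simp only [mu1, bdfDelta, show (6:ℕ) - 1 = 5 from rfl,
    show Finset.Icc 1 6 = ({1, 2, 3, 4, 5, 6} : Finset ℕ) from rfl,
    show Finset.Icc 1 5 = ({1, 2, 3, 4, 5} : Finset ℕ) from rfl]
  rw [Finset.sum_insert (by decide),
    Finset.sum_insert (by decide),
    Finset.sum_insert (by decide),
    Finset.sum_insert (by decide),
    Finset.sum_insert (by decide),
    Finset.sum_singleton,
    Finset.sum_insert (by decide),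
    Finset.sum_insert (by decide),
    Finset.sum_insert (by decide),
    Finset.sum_insert (by decide),
    Finset.sum_singleton,
    ha1,
    ha2,
    ha3,
    ha4,
    ha5]
  push_cast
  field_simp
  ring

lemma mu1_fac (k : ℕ) (hk1 : 1 ≤ k) (hk6 : k ≤ 6) (ξ : ℂ) (h : ξ ≠ 1) :
    mu1 k ξ - 1 = (1 - ξ) ^ k * muQ k ξ := by
  interval_cases k
  · exact mu1_fac1 ξ h
  · exact mu1_fac2 ξ h
  · exact mu1_fac3 ξ h
  · exact mu1_fac4 ξ h
  · exact mu1_fac5 ξ h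
  · exact mu1_fac6 ξ h

/-- Global Lipschitz-type bound: |e^x − 1| ≤ |x|·e^{|x|}. -/
lemma abs_exp_sub_one_le' (x : ℂ) :
    ‖Complex.exp x - 1‖ ≤ ‖x‖ * Real.exp (‖x‖) := by
  have h := Convex.norm_image_sub_le_of_norm_hasDerivWithin_le
    (f := Complex.exp) (f' := Complex.exp) (C := Real.exp (‖x‖))
    (s := Metric.closedBall (0:ℂ) (‖x‖)) (x := (0:ℂ)) (y := x)
    (fun y _ => (Complex.hasDerivAt_exp y).hasDerivWithinAt)
    (fun y hy => by
      simp only [Metric.mem_closedBall, dist_zero_right] at hy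
      rw [Complex.norm_exp]
      exact Real.exp_le_exp.2 ((Complex.re_le_norm y).trans hy))
    (convex_closedBall _ _)
    (Metric.mem_closedBall_self (norm_nonneg x))
    (by simp [Metric.mem_closedBall, dist_zero_right])
  simpa [Complex.exp_zero, mul_comm] using h

set_option maxHeartbeats 1600000 in
/-- For 1 ≤ k ≤ 6 and σ > 0: |μ₁(e^{−(σ+z)τ}) − 1| ≤ c·τ^k·|z|^k on Γ^τ_{θ,κ},
for κ large enough. -/
theorem mu1_error (k : ℕ) (hk1 : 1 ≤ k) (hk6 : k ≤ 6) (σ : ℝ) (hσ : 0 < σ) :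
    ∃ θ₀ ∈ Set.Ioo (π / 2) π, ∀ θ ∈ Set.Ioc (π / 2) θ₀,
      ∃ κ₀ > (0 : ℝ), ∀ κ : ℝ, κ₀ ≤ κ →
        ∃ c > (0 : ℝ), ∀ τ ∈ Set.Ioc (0 : ℝ) 1, κ * τ * Real.sin θ ≤ π →
          ∀ z ∈ contourTrunc θ κ τ,
            ‖mu1 k (Complex.exp (-((σ : ℂ) + z) * (τ : ℂ))) - 1‖
              ≤ c * τ ^ k * ‖z‖ ^ k := by
  have hπ := Real.pi_pos
  set Q : ℂ → ℂ := muQ k with hQdef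
  have hQ : Continuous Q := muQ_continuous k
  have hfac : ∀ ξ : ℂ, ξ ≠ 1 → mu1 k ξ - 1 = (1 - ξ) ^ k * Q ξ := mu1_fac k hk1 hk6
  refine ⟨2 * π / 3, ⟨by linarith, by linarith⟩, fun θ hθ => ?_⟩
  obtain ⟨hθ1, hθ2⟩ := hθ
  -- lower bound on sin θ
  have hsin : Real.sqrt 3 / 2 ≤ Real.sin θ := by
    have h1 : Real.sin (π / 3) ≤ Real.sin (π - θ) := by
      apply Real.strictMonoOn_sin.monotoneOn ⟨by linarith, by linarith⟩
        ⟨by linarith, by linarith⟩ (by linarith)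
    rwa [Real.sin_pi_div_three, Real.sin_pi_sub] at h1
  have hsqrt3 : (1:ℝ) < Real.sqrt 3 := by
    nlinarith [Real.sq_sqrt (by norm_num : (3:ℝ) ≥ 0), Real.sqrt_nonneg 3]
  have hspos : 0 < Real.sin θ := by nlinarith
  have hsinlt : π / Real.sin θ < 2 * π := by
    rw [div_lt_iff₀ hspos]
    nlinarith
  set M : ℝ := σ + π / Real.sin θ with hM
  have hMpos : 0 < M := by positivity
  obtain ⟨C, hC⟩ := (isCompact_closedBall (0:ℂ) (Real.exp M)).exists_bound_of_continuousOn
    hQ.continuousOn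
  have hC0 : 0 ≤ C := le_trans (norm_nonneg (Q 0))
    (hC 0 (Metric.mem_closedBall_self (Real.exp_pos M).le))
  refine ⟨1, one_pos, fun κ hκ => ⟨(C + 1) * Real.exp M ^ k * (1 + σ) ^ k, by positivity,
    fun τ hτ hκτ z hz => ?_⟩⟩
  obtain ⟨hτ0, hτ1⟩ := hτ
  -- bounds on |z|
  have hz1 : κ ≤ ‖z‖ ∧ τ * ‖z‖ ≤ π / Real.sin θ := by
    rcases hz with ⟨habs, _⟩ | ⟨r, hr1, hr2, hzeq⟩
    · refine ⟨habs.ge, ?_⟩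
      rw [habs, le_div_iff₀ hspos]
      nlinarith
    · have hr0 : (0:ℝ) < r := by linarith
      have habs : ‖z‖ = r := by
        rcases hzeq with h | h <;>
        · rw [h, norm_mul, Complex.norm_real, Real.norm_eq_abs, Complex.norm_exp, abs_of_pos hr0]
          simp [Complex.mul_re, Complex.I_re, Complex.I_im]
      refine ⟨by rw [habs]; exact hr1, ?_⟩
      rw [habs, le_div_iff₀ hspos]
      have h5 : r * (τ * Real.sin θ) ≤ π := (le_div_iff₀ (by positivity)).mp hr2
      nlinarith
  obtain ⟨hzκ, hzτ⟩ := hz1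
  have hz1' : (1:ℝ) ≤ ‖z‖ := le_trans hκ hzκ
  set w : ℂ := ((σ : ℂ) + z) * (τ : ℂ) with hw
  have habsw : ‖w‖ ≤ M := by
    have h1 : ‖w‖ ≤ (σ + ‖z‖) * τ := by
      rw [hw, norm_mul, Complex.norm_real, Real.norm_eq_abs, abs_of_pos hτ0]
      have := norm_add_le (σ : ℂ) z
      rw [Complex.norm_real, Real.norm_eq_abs, abs_of_pos hσ] at this
      exact mul_le_mul_of_nonneg_right this hτ0.le
    have h2 : σ * τ ≤ σ := by nlinarith
    have h3 : (σ + ‖z‖) * τ = σ * τ + τ * ‖z‖ := by ring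
    rw [hM]
    linarith
  have hξabs : ‖Complex.exp (-w)‖ ≤ Real.exp M := by
    rw [Complex.norm_exp]
    apply Real.exp_le_exp.2
    calc (-w).re ≤ |(-w).re| := le_abs_self _
      _ ≤ ‖-w‖ := Complex.abs_re_le_norm _
      _ = ‖w‖ := norm_neg w
      _ ≤ M := habsw
  -- the argument of μ₁ is never 1 on the contour
  have hξne : Complex.exp (-w) ≠ 1 := by
    intro hone
    rw [Complex.exp_eq_one_iff] at hone
    obtain ⟨n, hn⟩ := hone
    have him : -(z.im * τ) = n * (2 * π) := by
      have := congrArg Complex.im hn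
      simpa [hw, Complex.add_im, Complex.mul_im, Complex.ofReal_im, Complex.ofReal_re]
        using this
    have himb : |z.im * τ| < 2 * π := by
      rw [abs_mul, abs_of_pos hτ0]
      calc |z.im| * τ ≤ ‖z‖ * τ := by
            have := Complex.abs_im_le_norm z
            nlinarith [norm_nonneg z]
        _ = τ * ‖z‖ := mul_comm _ _
        _ ≤ π / Real.sin θ := hzτ
        _ < 2 * π := hsinlt
    have hn0 : n = 0 := by
      by_contra hn0
      have h1 : (1:ℝ) ≤ |(n:ℝ)| := by
        have := Int.one_le_abs hn0
        calc (1:ℝ) ≤ ((|n| : ℤ) : ℝ) := by exact_mod_cast this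
          _ = |(n:ℝ)| := by push_cast; rfl
      have h2 : |z.im * τ| = |(n:ℝ)| * (2 * π) := by
        rw [← abs_neg, him, abs_mul, abs_of_pos (by positivity : (0:ℝ) < 2 * π)]
      nlinarith
    rw [hn0] at hn
    simp only [Int.cast_zero, zero_mul, neg_eq_zero] at hn
    have hz0 : z = -(σ : ℂ) := by
      rw [hw] at hn
      have hτne : (τ : ℂ) ≠ 0 := Complex.ofReal_ne_zero.2 hτ0.ne'
      have := (mul_eq_zero.1 hn).resolve_right hτne
      linear_combination this
    rcases hz with ⟨habs, harg⟩ | ⟨r, hr1, hr2, hzeq⟩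
    · have hzz : z = ((-σ : ℝ) : ℂ) := by rw [hz0]; push_cast; ring
      rw [hzz, Complex.arg_ofReal_of_neg (by linarith)] at harg
      rw [abs_of_pos hπ] at harg
      linarith
    · have hr0 : (0:ℝ) < r := by linarith
      have him0 : z.im = 0 := by rw [hz0]; simp
      rcases hzeq with h | h
      · have h2 : z.im = r * Real.sin θ := by
          rw [h]
          simp [Complex.mul_im, Complex.exp_ofReal_mul_I_re, Complex.exp_ofReal_mul_I_im]
        rw [him0] at h2
        exact absurd h2.symm (ne_of_gt (mul_pos hr0 hspos))
      · have h2 : z.im = -(r * Real.sin θ) := by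
          have e2 : (Complex.exp (-(θ:ℂ) * Complex.I)).im = -Real.sin θ := by
            rw [show -(θ:ℂ) * Complex.I = ((-θ:ℝ):ℂ) * Complex.I from by push_cast; ring,
              Complex.exp_ofReal_mul_I_im, Real.sin_neg]
          rw [h]
          rw [Complex.mul_im, e2, Complex.ofReal_re, Complex.ofReal_im]
          ring
        rw [him0] at h2
        exact absurd (neg_eq_zero.mp h2.symm) (ne_of_gt (mul_pos hr0 hspos))
  -- main estimate
  have hξne' : Complex.exp (-((σ : ℂ) + z) * (τ : ℂ)) ≠ 1 := by
    rw [neg_mul]; exact hξne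
  rw [hfac _ hξne']
  have hfact : ‖1 - Complex.exp (-((σ : ℂ) + z) * (τ : ℂ))‖
      ≤ ‖w‖ * Real.exp M := by
    rw [← norm_neg, neg_sub, neg_mul]
    calc ‖Complex.exp (-w) - 1‖
        ≤ ‖-w‖ * Real.exp (‖-w‖) := abs_exp_sub_one_le' _
      _ = ‖w‖ * Real.exp (‖w‖) := by rw [norm_neg]
      _ ≤ ‖w‖ * Real.exp M :=
          mul_le_mul_of_nonneg_left (Real.exp_le_exp.2 habsw) (norm_nonneg w)
  have hQb : ‖Q (Complex.exp (-((σ : ℂ) + z) * (τ : ℂ)))‖ ≤ C := by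
    have hmem : Complex.exp (-((σ : ℂ) + z) * (τ : ℂ)) ∈
        Metric.closedBall (0:ℂ) (Real.exp M) := by
      rw [Metric.mem_closedBall, dist_zero_right, neg_mul]
      exact hξabs
    exact hC _ hmem
  have hwz : ‖w‖ ≤ τ * (1 + σ) * ‖z‖ := by
    have h1 : ‖w‖ ≤ (σ + ‖z‖) * τ := by
      rw [hw, norm_mul, Complex.norm_real, Real.norm_eq_abs, abs_of_pos hτ0]
      have := norm_add_le (σ : ℂ) z
      rw [Complex.norm_real, Real.norm_eq_abs, abs_of_pos hσ] at this
      exact mul_le_mul_of_nonneg_right this hτ0.le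
    have h2 : σ ≤ σ * ‖z‖ := by nlinarith
    nlinarith [norm_nonneg z]
  calc ‖(1 - Complex.exp (-((σ : ℂ) + z) * (τ : ℂ))) ^ k
          * Q (Complex.exp (-((σ : ℂ) + z) * (τ : ℂ)))‖
      = ‖1 - Complex.exp (-((σ : ℂ) + z) * (τ : ℂ))‖ ^ k
          * ‖Q (Complex.exp (-((σ : ℂ) + z) * (τ : ℂ)))‖ := by
        rw [norm_mul, norm_pow]
    _ ≤ (‖w‖ * Real.exp M) ^ k * C := by
        gcongr
    _ = C * Real.exp M ^ k * ‖w‖ ^ k := by ring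
    _ ≤ C * Real.exp M ^ k * (τ * (1 + σ) * ‖z‖) ^ k := by
        gcongr
    _ = C * Real.exp M ^ k * (1 + σ) ^ k * (τ ^ k * ‖z‖ ^ k) := by
        rw [mul_pow, mul_pow]
        ring
    _ ≤ (C + 1) * Real.exp M ^ k * (1 + σ) ^ k * (τ ^ k * ‖z‖ ^ k) := by
        gcongr ?_ * _ * _ * _
        linarith
    _ = (C + 1) * Real.exp M ^ k * (1 + σ) ^ k * τ ^ k * ‖z‖ ^ k := by ring
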